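/- If B is a p-basis of A over k, then the module of Kähler differentials Ω_{A/k} is a free A-module with basis {d_{A/k}(b) : b ∈ B}. -/

import Mathlib

open scoped TensorProduct

/-- The monomial `∏ b^(α b)` associated to a finitely supported exponent tuple on `B`. -/
noncomputable def pMonomial {A : Type*} [CommRing A] {B : Set A} (α : B →₀ ℕ) : A :=
  α.prod fun b n => (b : A) ^ n

/-- `B` is `p`-independent over `k`: the `p`-monomials in `B` are linearly independent
over the subring `A^p[k]`. -/
def IsPIndependent (k : Type*) {A : Type*} [CommRing k] [CommRing A] [Algebra k A]
    (p : ℕ) (B : Set A) : Prop :=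
  LinearIndependent (Algebra.adjoin k (Set.range fun a : A => a ^ p))
    (fun α : {α : B →₀ ℕ // ∀ b, α b < p} => pMonomial α.1)

/-- `B` is a `p`-basis of `A` over `k`. -/
def IsPBasis (k : Type*) {A : Type*} [CommRing k] [CommRing A] [Algebra k A]
    (p : ℕ) (B : Set A) : Prop :=
  IsPIndependent k p B ∧
    Algebra.adjoin k ((Set.range fun a : A => a ^ p) ∪ B) = ⊤

/-- An absolute `p`-basis: a `p`-basis over the prime field (equivalently over `ℤ`). -/
def IsAbsolutePBasis {A : Type*} [CommRing A] (p : ℕ) (B : Set A) : Prop :=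
  IsPBasis ℤ p B

/-- `B` is a differential basis of `A` over `k`. -/
def IsDifferentialBasis (k : Type*) {A : Type*} [CommRing k] [CommRing A] [Algebra k A]
    (B : Set A) : Prop :=
  ∃ bas : Module.Basis B A (KaehlerDifferential k A),
    ∀ b : B, bas b = KaehlerDifferential.D k A (b : A)

/-- Regular local ring: noetherian local ring whose maximal ideal is generated by
(Krull-)dimension many elements. -/
def IsRegularLocalRing' (R : Type*) [CommRing R] : Prop :=
  IsLocalRing R ∧ IsNoetherianRing R ∧
    ∃ (n : ℕ) (z : Fin n → R), (Ideal.span (Set.range z)).IsMaximal ∧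
      ringKrullDim R = n

/-- Regular ring: noetherian and all localizations at primes are regular local. -/
def IsRegularRing' (A : Type*) [CommRing A] : Prop :=
  IsNoetherianRing A ∧ ∀ (P : Ideal A) (hP : P.IsPrime), IsRegularLocalRing' (Localization.AtPrime P)

/-- Differential operators of order at most `n` over `k`, defined inductively. -/
def IsDiffOp (k A M : Type*) [CommRing k] [CommRing A] [Algebra k A]
    [AddCommGroup M] [Module A M] [Module k M] [IsScalarTower k A M] :
    ℕ → (A → M) → Prop
  | 0, D => IsLinearMap A D
  | (n + 1), D => IsLinearMap k D ∧
      ∀ a : A, IsDiffOp k A M n (fun f => a • D f - D (a * f))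

/-- Product of binomial coefficients `∏_b C(α_b, β_b)`. -/
noncomputable def pBinom {A : Type*} [CommRing A] {B : Set A} (α β : B →₀ ℕ) : ℕ :=
  letI := Classical.decEq A
  ∏ b ∈ α.support ∪ β.support, Nat.choose (α b) (β b)

/-- Product of multinomial coefficients `∏_b (β_b+β'_b)!/(β_b!β'_b!)`. -/
noncomputable def pMultinom {A : Type*} [CommRing A] {B : Set A} (β β' : B →₀ ℕ) : ℕ :=
  letI := Classical.decEq A
  ∏ b ∈ β.support ∪ β'.support, Nat.choose (β b + β' b) (β b)

/-- Height of an ideal: the infimum of the Krull dimensions of localizations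
at primes containing it. -/
noncomputable def idealHeight {R : Type*} [CommRing R] (I : Ideal R) : WithBot (WithTop ℕ) :=
  ⨅ Q : {Q : Ideal R // Q.IsPrime ∧ I ≤ Q},
    ringKrullDim (Localization (@Ideal.primeCompl R _ Q.1 Q.2.1))

/-- Differential saturation of an ideal by absolute differential operators of order `≤ n`. -/
noncomputable def diffSat {A : Type*} [CommRing A] (n : ℕ) (I : Ideal A) : Ideal A :=
  Ideal.span {g | ∃ f ∈ I, ∃ Δ : A → A, IsDiffOp ℤ A A n Δ ∧ g = Δ f}

section PMon
variable {A : Type*} [CommRing A] {B : Set A}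

theorem pMonomial_zero : pMonomial (0 : B →₀ ℕ) = 1 := Finsupp.prod_zero_index

theorem pMonomial_add (α β : B →₀ ℕ) : pMonomial (α + β) = pMonomial α * pMonomial β :=
  Finsupp.prod_add_index' (fun _ => pow_zero _) (fun _ m n => pow_add _ m n)

theorem pMonomial_single (b : B) : pMonomial (Finsupp.single b 1) = (b : A) := by
  simp [pMonomial, Finsupp.prod_single_index]

theorem pMonomial_nsmul (p : ℕ) (q : B →₀ ℕ) : pMonomial (p • q) = pMonomial q ^ p := by
  have h1 : (p • q) = q.mapRange (fun n => p * n) (by simp) := by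
    ext b; simp [mul_comm]
  rw [h1, pMonomial, Finsupp.prod_mapRange_index (by simp)]
  rw [pMonomial, Finsupp.prod, Finsupp.prod, ← Finset.prod_pow]
  exact Finset.prod_congr rfl fun b _ => by rw [mul_comm, pow_mul]

end PMon

open scoped Pointwise in
theorem statement4 {k A : Type*} [CommRing k] [CommRing A] [Algebra k A]
    (p : ℕ) [Fact p.Prime] [CharP A p] (B : Set A) (h : IsPBasis k p B) :
    IsDifferentialBasis k B := by
  classical
  obtain ⟨hind, hgen⟩ := h
  have hp : 0 < p := (Fact.out : p.Prime).pos
  set C := Algebra.adjoin k (Set.range fun a : A => a ^ p) with hCdef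
  have hmem : ∀ a : A, a ^ p ∈ C := fun a => Algebra.subset_adjoin ⟨a, rfl⟩
  have hsmul : ∀ (c : C) (x : A), c • x = (c : A) * x := fun c x => rfl
  have decomp : ∀ γ : B →₀ ℕ, ∃ q r : B →₀ ℕ, (∀ b, r b < p) ∧ γ = p • q + r := by
    intro γ
    refine ⟨γ.mapRange (· / p) (Nat.zero_div p), γ.mapRange (· % p) (Nat.zero_mod p),
      fun b => Nat.mod_lt _ hp, ?_⟩
    ext b
    simp only [Finsupp.add_apply, Finsupp.smul_apply, Finsupp.mapRange_apply, smul_eq_mul]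
    exact (Nat.div_add_mod (γ b) p).symm
  have hsub_add : ∀ (f g : B →₀ ℕ) (b₀ : B), 1 ≤ g b₀ →
      (f + g) - Finsupp.single b₀ 1 = f + (g - Finsupp.single b₀ 1) := by
    intro f g b₀ hg
    ext b
    rcases eq_or_ne b₀ b with rfl | hne
    · simp only [Finsupp.tsub_apply, Finsupp.add_apply, Finsupp.single_eq_same]
      omega
    · simp [Finsupp.tsub_apply, Finsupp.add_apply, Finsupp.single_eq_of_ne' hne]
  -- the p-monomials with exponents < p span A over C
  have hmono : ∀ γ : B →₀ ℕ, pMonomial γ ∈ Submodule.span C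
      (Set.range fun α : {α : B →₀ ℕ // ∀ b, α b < p} => pMonomial α.1) := by
    intro γ
    obtain ⟨q, r, hrp, hγ⟩ := decomp γ
    have h1 : pMonomial γ = (⟨pMonomial q ^ p, hmem _⟩ : C) • pMonomial r := by
      rw [hγ, pMonomial_add, pMonomial_nsmul]; rfl
    rw [h1]
    exact Submodule.smul_mem _ _ (Submodule.subset_span ⟨⟨r, hrp⟩, rfl⟩)
  have bspan : ⊤ ≤ Submodule.span C
      (Set.range fun α : {α : B →₀ ℕ // ∀ b, α b < p} => pMonomial α.1) := by
    intro x hxtop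
    clear hxtop
    have hx : x ∈ Algebra.adjoin k ((Set.range fun a : A => a ^ p) ∪ B) := by
      rw [hgen]; trivial
    induction hx using Algebra.adjoin_induction with
    | mem a ha =>
      rcases ha with ⟨a', rfl⟩ | hb
      · show a' ^ p ∈ _
        have h1 : a' ^ p = (⟨a' ^ p, hmem a'⟩ : C) • pMonomial (0 : B →₀ ℕ) := by
          rw [pMonomial_zero, hsmul, mul_one]
        rw [h1]
        exact Submodule.smul_mem _ _ (hmono 0)
      · have h1 : a = pMonomial (Finsupp.single (⟨a, hb⟩ : B) 1) :=
          (pMonomial_single (⟨a, hb⟩ : B)).symm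
        rw [h1]; exact hmono _
    | algebraMap r =>
      have h1 : algebraMap k A r = (algebraMap k C r) • pMonomial (0 : B →₀ ℕ) := by
        rw [pMonomial_zero, hsmul, mul_one]
        exact IsScalarTower.algebraMap_apply k C A r
      rw [h1]
      exact Submodule.smul_mem _ _ (hmono 0)
    | add x y _ _ hx hy => exact Submodule.add_mem _ hx hy
    | mul x y _ _ hx hy =>
      have hmul : x * y ∈ Submodule.span C
          ((Set.range fun α : {α : B →₀ ℕ // ∀ b, α b < p} => pMonomial α.1) *
            (Set.range fun α : {α : B →₀ ℕ // ∀ b, α b < p} => pMonomial α.1)) := by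
        rw [← Submodule.span_mul_span]
        exact Submodule.mul_mem_mul hx hy
      refine Submodule.span_le.mpr ?_ hmul
      rintro z hz
      rw [Set.mem_mul] at hz
      obtain ⟨u, ⟨α, rfl⟩, v, ⟨β, rfl⟩, rfl⟩ := hz
      show pMonomial α.1 * pMonomial β.1 ∈ _
      rw [← pMonomial_add]
      exact hmono _
  let bA : Module.Basis {α : B →₀ ℕ // ∀ b, α b < p} C A := Module.Basis.mk hind bspan
  have hbA : ∀ α, bA α = pMonomial α.1 := fun α => Module.Basis.mk_apply hind bspan α
  -- derivations dual to the elements of B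
  have hder : ∀ b₀ : B, ∃ d : Derivation k A A,
      ∀ b : B, d (b : A) = if b = b₀ then 1 else 0 := by
    intro b₀
    set e : B →₀ ℕ := Finsupp.single b₀ 1 with hedef
    let D0 : A →ₗ[C] A := bA.constr ℕ fun α => (α.1 b₀ : A) * pMonomial (α.1 - e)
    have hD0b : ∀ α : {α : B →₀ ℕ // ∀ b, α b < p},
        D0 (pMonomial α.1) = (α.1 b₀ : A) * pMonomial (α.1 - e) := by
      intro α
      rw [← hbA α]
      exact bA.constr_basis ℕ _ α
    have hD0 : ∀ γ : B →₀ ℕ, D0 (pMonomial γ) = (γ b₀ : A) * pMonomial (γ - e) := by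
      intro γ
      obtain ⟨q, r, hrp, hγ⟩ := decomp γ
      have h1 : pMonomial γ = (⟨pMonomial q ^ p, hmem _⟩ : C) • pMonomial r := by
        rw [hγ, pMonomial_add, pMonomial_nsmul]; rfl
      rw [h1, map_smul, hD0b ⟨r, hrp⟩, hsmul]
      have hγb : γ b₀ = p * q b₀ + r b₀ := by
        rw [hγ]; simp [mul_comm]
      have hcast : (γ b₀ : A) = (r b₀ : A) := by
        rw [hγb]; push_cast [CharP.cast_eq_zero A p]; ring
      rcases Nat.eq_zero_or_pos (r b₀) with h0 | h0
      · simp [h0, hcast]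
      · have hsub : γ - e = p • q + (r - e) := by
          rw [hγ, hedef]
          exact hsub_add _ _ _ h0
        rw [hsub, pMonomial_add, pMonomial_nsmul, hcast]
        ring
    have haux : ∀ γ δ : B →₀ ℕ, (δ b₀ : A) * (pMonomial γ * pMonomial (δ - e))
        = (δ b₀ : A) * pMonomial (γ + δ - e) := by
      intro γ δ
      rcases Nat.eq_zero_or_pos (δ b₀) with h0 | h0
      · simp [h0]
      · have hsub : γ + δ - e = γ + (δ - e) := by
          rw [hedef]
          exact hsub_add _ _ _ h0
        rw [hsub, pMonomial_add]
    have key : ∀ γ δ : B →₀ ℕ, D0 (pMonomial γ * pMonomial δ)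
        = pMonomial γ * D0 (pMonomial δ) + pMonomial δ * D0 (pMonomial γ) := by
      intro γ δ
      rw [← pMonomial_add, hD0, hD0, hD0]
      have h1 : ((γ + δ) b₀ : A) = (γ b₀ : A) + (δ b₀ : A) := by
        simp
      have t1 : pMonomial γ * ((δ b₀ : A) * pMonomial (δ - e))
          = (δ b₀ : A) * pMonomial (γ + δ - e) := by
        rw [← haux γ δ]; ring
      have t2 : pMonomial δ * ((γ b₀ : A) * pMonomial (γ - e))
          = (γ b₀ : A) * pMonomial (γ + δ - e) := by
        rw [add_comm γ δ, ← haux δ γ]; ring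
      rw [t1, t2, h1]; ring
    have hLeib : ∀ x y : A, D0 (x * y) = x * D0 y + y * D0 x := by
      have hbil : ((LinearMap.mul C A).compr₂ D0)
          = (LinearMap.mul C A).compl₂ D0 + ((LinearMap.mul C A).compl₂ D0).flip := by
        apply bA.ext; intro α
        apply bA.ext; intro β
        simp only [LinearMap.compr₂_apply, LinearMap.compl₂_apply, LinearMap.add_apply,
          LinearMap.flip_apply, LinearMap.mul_apply', hbA]
        exact key α.1 β.1
      intro x y
      have h2 := LinearMap.congr_fun (LinearMap.congr_fun hbil x) y
      simpa using h2
    refine ⟨⟨D0.restrictScalars k, ?_, ?_⟩, ?_⟩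
    · show D0 1 = 0
      have h1 : (1 : A) = pMonomial (0 : B →₀ ℕ) := pMonomial_zero.symm
      rw [h1, hD0]
      simp
    · intro x y
      show D0 (x * y) = x • D0 y + y • D0 x
      rw [smul_eq_mul, smul_eq_mul]
      exact hLeib x y
    · intro b
      show D0 (b : A) = _
      rw [← pMonomial_single b, hD0]
      by_cases hb : b = b₀
      · subst hb
        have h1 : Finsupp.single b 1 - e = 0 := by rw [hedef, tsub_self]
        simp [h1, Finsupp.single_apply, pMonomial_zero]
      · have h1 : (Finsupp.single b 1) b₀ = 0 := by
          rw [Finsupp.single_apply, if_neg hb]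
        simp [h1, hb]
  -- linear independence of the differentials
  have hli : LinearIndependent A (fun b : B => KaehlerDifferential.D k A (b : A)) := by
    rw [linearIndependent_iff']
    intro s g hsum b₀ hb₀
    obtain ⟨d, hd⟩ := hder b₀
    have h2 := congrArg d.liftKaehlerDifferential hsum
    rw [map_sum, map_zero] at h2
    simp only [map_smul, Derivation.liftKaehlerDifferential_comp_D, hd] at h2
    rw [Finset.sum_eq_single_of_mem b₀ hb₀ (fun b _ hne => by simp [hne])] at h2
    simpa using h2
  -- the differentials span
  have hsp : ⊤ ≤ Submodule.span A (Set.range fun b : B => KaehlerDifferential.D k A (b : A)) := by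
    rw [← KaehlerDifferential.span_range_derivation, Submodule.span_le]
    rintro _ ⟨a, rfl⟩
    have ha : a ∈ Algebra.adjoin k ((Set.range fun a : A => a ^ p) ∪ B) := by
      rw [hgen]; trivial
    induction ha using Algebra.adjoin_induction with
    | mem a ha =>
      rcases ha with ⟨a', rfl⟩ | hb
      · show KaehlerDifferential.D k A (a' ^ p) ∈ _
        rw [Derivation.leibniz_pow, ← Nat.cast_smul_eq_nsmul A, CharP.cast_eq_zero A p, zero_smul]
        exact Submodule.zero_mem _
      · exact Submodule.subset_span ⟨⟨a, hb⟩, rfl⟩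
    | algebraMap r =>
      show KaehlerDifferential.D k A (algebraMap k A r) ∈ _
      rw [Derivation.map_algebraMap]
      exact Submodule.zero_mem _
    | add x y _ _ hx hy =>
      show KaehlerDifferential.D k A (x + y) ∈ _
      rw [map_add]
      exact Submodule.add_mem _ hx hy
    | mul x y _ _ hx hy =>
      show KaehlerDifferential.D k A (x * y) ∈ _
      rw [Derivation.leibniz]
      exact Submodule.add_mem _ (Submodule.smul_mem _ _ hy) (Submodule.smul_mem _ _ hx)
  exact ⟨Module.Basis.mk hli hsp, fun b => Module.Basis.mk_apply hli hsp b⟩
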